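/- Let Δ be a simplicial complex on {1,...,r}. Then for all n ≥ 1, the maximal degree of a minimal monomial generator of I_Δ^(n) satisfies d(I_Δ^(n)) ≤ δ(I_Δ) · n, where δ(I_Δ) = max{|v| : v is a vertex of SP(Δ)} and SP(Δ) is the polyhedron {x ∈ ℝ^r : ∑_{i ∉ F} x_i ≥ 1 for all facets F of Δ, x_i ≥ 0 for all i}. -/

import Mathlib

/-- Membership of the monomial `x^α` in the `n`-th symbolic power
`I_Δ^(n) = ⋂_{F facet} P_F^n`: `∑_{j ∉ F} α j ≥ n` for all facets `F`. -/
def memSymbSR {r : ℕ} (ℱ : Finset (Finset (Fin r))) (n : ℕ) (α : Fin r → ℕ) : Prop :=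
  ∀ F ∈ ℱ, n ≤ ∑ j ∈ Fᶜ, α j

/-- `x^α` is a minimal monomial generator of `I_Δ^(n)`. -/
def isMinGenSymbSR {r : ℕ} (ℱ : Finset (Finset (Fin r))) (n : ℕ) (α : Fin r → ℕ) : Prop :=
  memSymbSR ℱ n α ∧ ∀ β : Fin r → ℕ, β ≤ α → β ≠ α → ¬ memSymbSR ℱ n β

/-- The polyhedron `SP(Δ) = {x ∈ ℝ^r : ∑_{i ∉ F} x i ≥ 1 for all facets F, x ≥ 0}`. -/
def SPcomplex {r : ℕ} (ℱ : Finset (Finset (Fin r))) : Set (Fin r → ℝ) :=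
  {x | (∀ F ∈ ℱ, 1 ≤ ∑ i ∈ Fᶜ, x i) ∧ ∀ i, 0 ≤ x i}

/-- A face of a set cut out by equalities in valid inequalities is an extreme set. -/
lemma extreme_eqs {r : ℕ} (A : Set (Fin r → ℝ)) (S : Fin r → Finset (Fin r)) (c : Fin r → ℝ)
    (h : ∀ i, ∀ a ∈ A, c i ≤ ∑ j ∈ S i, a j) :
    IsExtreme ℝ A {y | y ∈ A ∧ ∀ i, ∑ j ∈ S i, y j = c i} := by
  constructor
  · exact fun y hy => hy.1
  · rintro x1 hx1 x2 hx2 x hxT hseg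
    obtain ⟨t, s, ht, hs, hts, rfl⟩ := hseg
    have key : ∀ i, ∑ j ∈ S i, x1 j = c i ∧ ∑ j ∈ S i, x2 j = c i := by
      intro i
      have h1 := h i x1 hx1
      have h2 := h i x2 hx2
      have hsum : ∑ j ∈ S i, (t • x1 + s • x2) j
          = t * ∑ j ∈ S i, x1 j + s * ∑ j ∈ S i, x2 j := by
        simp [Finset.mul_sum, Finset.sum_add_distrib]
      have heq := hxT.2 i
      rw [hsum] at heq
      have hcsplit : t * c i + s * c i = c i := by linear_combination c i * hts
      constructor
      · refine le_antisymm ?_ h1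
        have hmul : t * (∑ j ∈ S i, x1 j) ≤ t * c i := by
          linarith [mul_le_mul_of_nonneg_left h2 hs.le]
        exact le_of_mul_le_mul_left hmul ht
      · refine le_antisymm ?_ h2
        have hmul : s * (∑ j ∈ S i, x2 j) ≤ s * c i := by
          linarith [mul_le_mul_of_nonneg_left h1 ht.le]
        exact le_of_mul_le_mul_left hmul hs
    exact ⟨hx1, fun i => (key i).1⟩

/-- For a minimal generator and a coordinate in its support there is a tight facet. -/
lemma tight_facet {r : ℕ} (ℱ : Finset (Finset (Fin r))) (n : ℕ)
    (α : Fin r → ℕ) (hα : isMinGenSymbSR ℱ n α) (i : Fin r) (hi : α i ≠ 0) :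
    ∃ F ∈ ℱ, i ∈ Fᶜ ∧ ∑ j ∈ Fᶜ, α j = n := by
  classical
  set β := Function.update α i (α i - 1) with hβ
  have hβle : β ≤ α := by
    intro j
    by_cases hj : j = i
    · subst hj
      simp only [hβ, Function.update_self]
      omega
    · simp [hβ, Function.update_of_ne hj]
  have hβne : β ≠ α := by
    intro hcon
    have := congrFun hcon i
    simp [hβ] at this
    omega
  have hnot := hα.2 β hβle hβne
  unfold memSymbSR at hnot
  push_neg at hnot
  obtain ⟨F, hF, hFlt⟩ := hnot
  have hiF : i ∈ Fᶜ := by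
    by_contra hiF
    have : ∑ j ∈ Fᶜ, β j = ∑ j ∈ Fᶜ, α j := by
      refine Finset.sum_congr rfl fun j hj => ?_
      have : j ≠ i := fun h => hiF (h ▸ hj)
      simp [hβ, Function.update_of_ne this]
    rw [this] at hFlt
    exact absurd (hα.1 F hF) (not_le.mpr hFlt)
  refine ⟨F, hF, hiF, ?_⟩
  have hsplitα : ∑ j ∈ Fᶜ, α j = α i + ∑ j ∈ Fᶜ \ {i}, α j := by
    rw [Finset.sdiff_singleton_eq_erase, Finset.add_sum_erase _ _ hiF]
  have h1 : ∑ j ∈ Fᶜ, β j = β i + ∑ j ∈ Fᶜ \ {i}, β j := by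
    rw [Finset.sdiff_singleton_eq_erase, Finset.add_sum_erase _ _ hiF]
  have h2 : β i = α i - 1 := by simp [hβ]
  have h3 : ∑ j ∈ Fᶜ \ {i}, β j = ∑ j ∈ Fᶜ \ {i}, α j := by
    refine Finset.sum_congr rfl fun j hj => ?_
    have hji : j ≠ i := by simp at hj; exact hj.2
    simp [hβ, Function.update_of_ne hji]
  have hge := hα.1 F hF
  omega

/-- every minimal monomial generator of `I_Δ^(n)` has degree at most
`δ(I_Δ) · n`, where `δ(I_Δ)` is the maximal coordinate sum of a vertex (extreme
point) of the polyhedron `SP(Δ)`. -/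
theorem degree_minGen_le_delta_mul
    {r : ℕ} (ℱ : Finset (Finset (Fin r))) (hℱ : ℱ.Nonempty)
    (hfacets : ∀ F ∈ ℱ, ∀ G ∈ ℱ, F ⊆ G → F = G)
    (δ : ℝ)
    (hδ : IsGreatest {x : ℝ | ∃ v ∈ Set.extremePoints ℝ (SPcomplex ℱ), x = ∑ i, v i} δ)
    (n : ℕ) (hn : 1 ≤ n) (α : Fin r → ℕ) (hα : isMinGenSymbSR ℱ n α) :
    (∑ i, (α i : ℝ)) ≤ δ * n := by
  classical
  have hnR : (0:ℝ) < n := by exact_mod_cast hn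
  set c : Fin r → ℝ := fun i => if α i = 0 then 0 else 1 with hc
  have key : ∀ i : Fin r, ∃ S : Finset (Fin r), i ∈ S ∧ (∑ j ∈ S, (α j : ℝ)) = c i * n ∧
      ∀ a ∈ SPcomplex ℱ, c i ≤ ∑ j ∈ S, a j := by
    intro i
    by_cases hi : α i = 0
    · refine ⟨{i}, Finset.mem_singleton_self i, ?_, ?_⟩
      · simp [hc, hi]
      · intro a ha
        simpa [hc, hi] using ha.2 i
    · obtain ⟨F, hF, hiF, hFsum⟩ := tight_facet ℱ n α hα i hi
      refine ⟨Fᶜ, hiF, ?_, ?_⟩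
      · have : ((∑ j ∈ Fᶜ, α j : ℕ) : ℝ) = (n : ℝ) := by exact_mod_cast congrArg Nat.cast hFsum
        push_cast at this
        simp [hc, hi, this]
      · intro a ha
        simpa [hc, hi] using ha.1 F hF
  choose S hS1 hS2 hS3 using key
  set T : Set (Fin r → ℝ) := {y | y ∈ SPcomplex ℱ ∧ ∀ i, ∑ j ∈ S i, y j = c i} with hT
  have hext : IsExtreme ℝ (SPcomplex ℱ) T := extreme_eqs _ S c hS3
  -- the point α/n lies in T
  have hxSP : (fun i => (α i : ℝ) / n) ∈ SPcomplex ℱ := by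
    constructor
    · intro F hF
      have hge := hα.1 F hF
      rw [← Finset.sum_div, le_div_iff₀ hnR, one_mul]
      exact_mod_cast hge
    · intro i
      positivity
  have hxT : (fun i => (α i : ℝ) / n) ∈ T := by
    refine ⟨hxSP, fun i => ?_⟩
    rw [← Finset.sum_div, hS2 i, mul_div_assoc, div_self (ne_of_gt hnR), mul_one]
  -- T is convex
  have hTconv : Convex ℝ T := by
    intro u hu v hv a b ha hb hab
    have hsum : ∀ (s : Finset (Fin r)),
        ∑ j ∈ s, (a • u + b • v) j = a * ∑ j ∈ s, u j + b * ∑ j ∈ s, v j := by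
      intro s
      simp [Finset.mul_sum, Finset.sum_add_distrib]
    refine ⟨⟨fun F hF => ?_, fun i => ?_⟩, fun i => ?_⟩
    · have h1 := hu.1.1 F hF
      have h2 := hv.1.1 F hF
      rw [hsum]
      nlinarith
    · have h1 := hu.1.2 i
      have h2 := hv.1.2 i
      have : (a • u + b • v) i = a * u i + b * v i := by simp
      rw [this]
      positivity
    · rw [hsum, hu.2 i, hv.2 i]
      linear_combination c i * hab
  -- T is closed
  have hSPclosed : IsClosed (SPcomplex ℱ) := by
    have hrw : SPcomplex ℱ =
        (⋂ F ∈ ℱ, {x : Fin r → ℝ | 1 ≤ ∑ i ∈ Fᶜ, x i}) ∩ ⋂ i, {x : Fin r → ℝ | 0 ≤ x i} := by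
      ext x
      simp [SPcomplex, Set.mem_iInter]
    rw [hrw]
    refine IsClosed.inter (isClosed_biInter fun F _ => ?_) (isClosed_iInter fun i => ?_)
    · exact isClosed_le continuous_const (continuous_finset_sum _ fun j _ => continuous_apply j)
    · exact isClosed_le continuous_const (continuous_apply i)
  have hTclosed : IsClosed T := by
    have hrw : T = SPcomplex ℱ ∩ ⋂ i, {y : Fin r → ℝ | ∑ j ∈ S i, y j = c i} := by
      ext y
      simp [hT, Set.mem_iInter]
    rw [hrw]
    exact hSPclosed.inter (isClosed_iInter fun i =>
      isClosed_eq (continuous_finset_sum _ fun j _ => continuous_apply j) continuous_const)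
  -- T is bounded, hence compact
  have hTsub : T ⊆ Set.Icc (0 : Fin r → ℝ) 1 := by
    intro y hy
    rw [Set.mem_Icc]
    constructor
    · intro i
      exact hy.1.2 i
    · intro i
      have hle : y i ≤ ∑ j ∈ S i, y j :=
        Finset.single_le_sum (fun j _ => hy.1.2 j) (hS1 i)
      have hci : c i ≤ 1 := by
        by_cases hi : α i = 0 <;> simp [hc, hi]
      calc y i ≤ ∑ j ∈ S i, y j := hle
        _ = c i := hy.2 i
        _ ≤ 1 := hci
  have hTcomp : IsCompact T := IsCompact.of_isClosed_subset isCompact_Icc hTclosed hTsub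
  -- Krein–Milman and the halfspace bound
  have hKM := closure_convexHull_extremePoints hTcomp hTconv
  have hEsub : T.extremePoints ℝ ⊆ {y : Fin r → ℝ | ∑ i, y i ≤ δ} := by
    intro v hv
    exact hδ.2 ⟨v, hext.extremePoints_subset_extremePoints hv, rfl⟩
  have hCconv : Convex ℝ {y : Fin r → ℝ | ∑ i, y i ≤ δ} := by
    refine convex_halfSpace_le ⟨fun u v => ?_, fun t u => ?_⟩ δ
    · simp [Finset.sum_add_distrib]
    · simp [Finset.mul_sum]
  have hCclosed : IsClosed {y : Fin r → ℝ | ∑ i, y i ≤ δ} :=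
    isClosed_le (continuous_finset_sum _ fun j _ => continuous_apply j) continuous_const
  have hTC : T ⊆ {y : Fin r → ℝ | ∑ i, y i ≤ δ} := by
    rw [← hKM]
    exact closure_minimal (convexHull_min hEsub hCconv) hCclosed
  have hxC : ∑ i, (α i : ℝ) / n ≤ δ := hTC hxT
  rw [← Finset.sum_div, div_le_iff₀ hnR] at hxC
  exact hxC
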